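/- (Unique symmetric Markov extension) Every Markov measure $\lambda_0$ on $\Sigma_N$ admits a unique symmetric Markov extension $\lambda$ on $\Sigma_A$, i.e. a unique Markov measure $\lambda$ on $\Sigma_A$ with $\pi_*\lambda=\lambda_0$ whose probability vector $(p_i)$ and stochastic matrix $(P_{ij})$ satisfy $p_i=p_{i+N}$, $P_{ij}=P_{(i+N)(j+N)}$ and $P_{i(j+N)}=P_{(i+N)j}$ for all $i,j\in\{1,\dots,N\}$. -/

import Mathlib

open Set Filter MeasureTheory Topology

noncomputable section

/-- The base space `Σ_N = {1,…,N}^ℤ`. -/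
abbrev BSeq (N : ℕ) := ℤ → Fin N

/-- The shift map on bilateral sequences. -/
def shiftSeq {α : Type*} (ξ : ℤ → α) : ℤ → α := fun n => ξ (n + 1)

/-- The unit interval. -/
def I01 : Set ℝ := Set.Icc 0 1

/-- Forward composition of fiber maps: `fw h ξ n = h (ξ (n-1)) ∘ ⋯ ∘ h (ξ 0)`. -/
def fw {α : Type*} (h : α → ℝ → ℝ) (ξ : ℤ → α) : ℕ → ℝ → ℝ
  | 0 => id
  | n + 1 => fun p => h (ξ (n : ℤ)) (fw h ξ n p)

/-- The step skew-product `F(ξ,p) = (σξ, f_{ξ₀}(p))`. -/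
def Fmap {N : ℕ} (f : Fin N → ℝ → ℝ) (z : BSeq N × ℝ) : BSeq N × ℝ :=
  (shiftSeq z.1, f (z.1 0) z.2)


/-- Doubled symbol set `{1,…,2N}`: `(i, false)` is `i`, `(i, true)` is `i + N`. -/
abbrev DSym (N : ℕ) := Fin N × Bool

/-- `A`-admissibility for the orientation-doubling transition matrix, where
`part i = true` iff `f i` is orientation preserving. -/
def Admissible {N : ℕ} (part : Fin N → Bool) (ω : ℤ → DSym N) : Prop :=
  ∀ n : ℤ, (ω (n + 1)).2 = xor ((ω n).2) (!(part (ω n).1))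

/-- The subshift of finite type `Σ_A` of `A`-admissible bilateral sequences. -/
abbrev SigmaA (N : ℕ) (part : Fin N → Bool) := {ω : ℤ → DSym N // Admissible part ω}

/-- The shift map `σ_A` on `Σ_A`. -/
def shiftA {N : ℕ} {part : Fin N → Bool} (ω : SigmaA N part) : SigmaA N part :=
  ⟨shiftSeq ω.1, fun n => ω.2 (n + 1)⟩

/-- The 2-to-1 projection `π : Σ_A → Σ_N`, `π(ω)_n = ω_n mod N`. -/
def piA {N : ℕ} {part : Fin N → Bool} (ω : SigmaA N part) : BSeq N :=
  fun n => (ω.1 n).1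

/-- The reflection `R(x) = 1 - x`. -/
def R : ℝ → ℝ := fun x => 1 - x

/-- The fiber maps of the extended step skew-product:
`g_i = f_i`, `g_{i+N} = R∘f_i∘R` for orientation-preserving `f_i`, and
`g_i = R∘f_i`, `g_{i+N} = f_i∘R` for orientation-reversing `f_i`. -/
def gmap {N : ℕ} (f : Fin N → ℝ → ℝ) (part : Fin N → Bool) : DSym N → ℝ → ℝ :=
  fun s =>
    if part s.1 then (if s.2 then R ∘ f s.1 ∘ R else f s.1)
    else (if s.2 then f s.1 ∘ R else R ∘ f s.1)

/-- The extended step skew-product `G(ω,x) = (σ_A ω, g_{ω₀}(x))`. -/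
def Gmap {N : ℕ} {part : Fin N → Bool} (f : Fin N → ℝ → ℝ)
    (z : SigmaA N part × ℝ) : SigmaA N part × ℝ :=
  (shiftA z.1, gmap f part (z.1.1 0) z.2)

/-- The 2-to-1 projection `Π : Σ_A × I → Σ_N × I`. -/
def PiMap {N : ℕ} {part : Fin N → Bool} (z : SigmaA N part × ℝ) : BSeq N × ℝ :=
  (piA z.1, if (z.1.1 0).2 then R z.2 else z.2)

/-- Orientation hypothesis: `part` records which fiber maps preserve orientation. -/
def OrientPart {N : ℕ} (f : Fin N → ℝ → ℝ) (part : Fin N → Bool) : Prop :=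
  ∀ i, (part i = true → StrictMonoOn (f i) I01) ∧ (part i = false → StrictAntiOn (f i) I01)

open scoped ENNReal

/-- The cylinder `[m; w₀ … w_k]`. -/
def cylinder {α : Type*} (m : ℤ) (k : ℕ) (w : ℕ → α) : Set (ℤ → α) :=
  {η | ∀ i : ℕ, i ≤ k → η (m + i) = w i}

/-- `lam` is the Markov measure with probability vector `p` and transition matrix `P`. -/
def IsMarkov {α : Type*} [MeasurableSpace α] (lam : MeasureTheory.Measure (ℤ → α))
    (p : α → ℝ≥0∞) (P : α → α → ℝ≥0∞) : Prop :=
  ∀ (m : ℤ) (k : ℕ) (w : ℕ → α),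
    lam (cylinder m k w) = p (w 0) * ∏ i ∈ Finset.range k, P (w i) (w (i + 1))

/-- Stochasticity and stationarity of the pair `(p, P)`. -/
def IsStochastic {α : Type*} [Fintype α] (p : α → ℝ≥0∞) (P : α → α → ℝ≥0∞) : Prop :=
  (∑ a, p a) = 1 ∧ (∀ a, (∑ b, P a b) = 1) ∧ (∀ b, (∑ a, p a * P a b) = p b)

/-- Symmetry of a Markov pair on the doubled alphabet: `p_i = p_{i+N}`,
`P_{ij} = P_{(i+N)(j+N)}` and `P_{i(j+N)} = P_{(i+N)j}`. -/
def SymMarkov {N : ℕ} (p : DSym N → ℝ≥0∞) (P : DSym N → DSym N → ℝ≥0∞) : Prop :=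
  (∀ s : DSym N, p s = p (s.1, !s.2)) ∧
  (∀ s t : DSym N, P s t = P (s.1, !s.2) (t.1, !t.2))

/-- Compatibility of the transition matrix with the admissibility matrix `A`. -/
def CompatA {N : ℕ} (part : Fin N → Bool) (P : DSym N → DSym N → ℝ≥0∞) : Prop :=
  ∀ s t : DSym N, t.2 ≠ xor s.2 (!(part s.1)) → P s t = 0

/-- Projection of doubled sequences to `Σ_N`. -/
def projSeq {N : ℕ} (ω : ℤ → DSym N) : BSeq N := fun n => (ω n).1
set_option linter.unusedSectionVars false
namespace USME
open scoped ENNReal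

lemma ennreal_mul_cancel {a b c : ℝ≥0∞} (h0 : a ≠ 0) (ht : a ≠ ⊤) (h : a * b = a * c) :
    b = c := by
  have := congrArg (a⁻¹ * ·) h
  simpa [← mul_assoc, ENNReal.inv_mul_cancel h0 ht] using this

variable {α : Type*} [MeasurableSpace α] [MeasurableSingletonClass α] [Countable α]

/-- Restriction of a bilateral sequence to the window `[m, m+k]`. -/
def restr (m : ℤ) (k : ℕ) (η : ℤ → α) : Fin (k + 1) → α := fun i => η (m + (i : ℕ))

lemma measurable_restr (m : ℤ) (k : ℕ) : Measurable (restr (α := α) m k) :=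
  measurable_pi_lambda _ fun _ => measurable_pi_apply _

lemma cylinder_eq_restr (m : ℤ) (k : ℕ) (w : ℕ → α) :
    cylinder m k w = restr m k ⁻¹' {fun i : Fin (k + 1) => w i} := by
  ext η
  constructor
  · intro h
    funext i
    exact h i (Nat.lt_succ_iff.mp i.isLt)
  · intro h i hi
    have := congrFun h ⟨i, Nat.lt_succ_of_le hi⟩
    simpa [restr] using this

lemma measurableSet_cylinder (m : ℤ) (k : ℕ) (w : ℕ → α) :
    MeasurableSet (cylinder m k w) := by
  rw [cylinder_eq_restr]
  exact measurable_restr m k MeasurableSet.of_discrete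

lemma measure_restr_preimage [Fintype α] (μ : MeasureTheory.Measure (ℤ → α)) (m : ℤ) (k : ℕ)
    (B : Set (Fin (k + 1) → α)) :
    μ (restr m k ⁻¹' B) = ∑ v ∈ B.toFinite.toFinset, μ (restr m k ⁻¹' {v}) := by
  have hB : restr m k ⁻¹' B = ⋃ v ∈ B.toFinite.toFinset, restr m k ⁻¹' {v} := by
    ext η
    simp [Set.Finite.mem_toFinset]
  rw [hB, measure_biUnion_finset]
  · intro v hv v' hv' hne
    refine Set.disjoint_left.mpr fun η h1 h2 => hne ?_
    rw [← Set.mem_singleton_iff.mp h1, Set.mem_singleton_iff.mp h2]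
  · exact fun v _ => measurable_restr m k (measurableSet_singleton v)

/-- Extension of a finite word to `ℕ`. -/
def wext (k : ℕ) (v : Fin (k + 1) → α) : ℕ → α :=
  fun i => if h : i < k + 1 then v ⟨i, h⟩ else v 0

lemma restr_singleton_eq_cylinder (m : ℤ) (k : ℕ) (v : Fin (k + 1) → α) :
    restr m k ⁻¹' {v} = cylinder m k (wext k v) := by
  rw [cylinder_eq_restr]
  have : (fun i : Fin (k + 1) => wext k v (i : ℕ)) = v := by
    funext i
    simp [wext, i.isLt]
  rw [this]

lemma measure_window_eq_of_cylinder_eq [Fintype α] {μ ν : MeasureTheory.Measure (ℤ → α)}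
    (h : ∀ (m : ℤ) (k : ℕ) (w : ℕ → α), μ (cylinder m k w) = ν (cylinder m k w))
    (m : ℤ) (k : ℕ) (B : Set (Fin (k + 1) → α)) :
    μ (restr m k ⁻¹' B) = ν (restr m k ⁻¹' B) := by
  rw [measure_restr_preimage, measure_restr_preimage]
  refine Finset.sum_congr rfl fun v _ => ?_
  rw [restr_singleton_eq_cylinder]
  exact h m k _

/-- The π-system of finite-window sets. -/
def cylSets (α : Type*) : Set (Set (ℤ → α)) :=
  {s | ∃ (m : ℤ) (k : ℕ) (B : Set (Fin (k + 1) → α)), s = restr m k ⁻¹' B}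

lemma restr_preimage_widen (m m' : ℤ) (k k' : ℕ) (h1 : m ≤ m') (h2 : m' + k' ≤ m + k)
    (B : Set (Fin (k' + 1) → α)) :
    restr m' k' ⁻¹' B =
      restr m k ⁻¹' ((fun v (i : Fin (k' + 1)) =>
        v ⟨(m' - m).toNat + i, by have := i.isLt; omega⟩) ⁻¹' B) := by
  ext η
  simp only [Set.mem_preimage]
  have : (fun i : Fin (k' + 1) =>
      restr m k η ⟨(m' - m).toNat + (i : ℕ), by have := i.isLt; omega⟩) = restr m' k' η := by
    funext i
    simp only [restr]
    congr 1
    push_cast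
    omega
  rw [this]

lemma isPiSystem_cylSets : IsPiSystem (cylSets α) := by
  rintro s ⟨m1, k1, B1, rfl⟩ t ⟨m2, k2, B2, rfl⟩ -
  set m : ℤ := min m1 m2 with hm
  set M : ℤ := max (m1 + k1) (m2 + k2) with hM
  set k : ℕ := (M - m).toNat with hk
  have e1 := restr_preimage_widen (α := α) m m1 k k1 (by omega) (by omega) B1
  have e2 := restr_preimage_widen (α := α) m m2 k k2 (by omega) (by omega) B2
  rw [e1, e2, ← Set.preimage_inter]
  exact ⟨m, k, _, rfl⟩

lemma generateFrom_cylSets :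
    (inferInstance : MeasurableSpace (ℤ → α)) = .generateFrom (cylSets α) := by
  refine le_antisymm ?_ ?_
  · refine iSup_le fun n => ?_
    refine measurable_iff_comap_le.mp ?_
    intro A _
    refine MeasurableSpace.measurableSet_generateFrom ⟨n, 0, {v | v 0 ∈ A}, ?_⟩
    ext η
    simp [restr]
  · refine MeasurableSpace.generateFrom_le ?_
    rintro s ⟨m, k, B, rfl⟩
    exact measurable_restr m k MeasurableSet.of_discrete

end USME
namespace USME
open scoped ENNReal

variable {N : ℕ}

/-- Weight of a symbol: `1` iff orientation reversing. -/
def wz (part : Fin N → Bool) (i : Fin N) : ZMod 2 := if part i then 0 else 1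

/-- Accumulated parity of reversals between time `0` and time `n`. -/
def Sgn (part : Fin N → Bool) (ξ : BSeq N) (n : ℤ) : ZMod 2 :=
  if 0 ≤ n then ∑ j ∈ Finset.range n.toNat, wz part (ξ j)
  else ∑ j ∈ Finset.range (-n).toNat, wz part (ξ (n + j))

lemma zmod2_add_self (x : ZMod 2) : x + x = 0 := by revert x; decide

lemma Sgn_succ (part : Fin N → Bool) (ξ : BSeq N) (n : ℤ) :
    Sgn part ξ (n + 1) = Sgn part ξ n + wz part (ξ n) := by
  rcases le_or_gt 0 n with h | h
  · rw [Sgn, if_pos (by omega : (0:ℤ) ≤ n + 1), Sgn, if_pos h]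
    have ht : (n + 1).toNat = n.toNat + 1 := by omega
    rw [ht, Finset.sum_range_succ, Int.toNat_of_nonneg h]
  · rcases eq_or_lt_of_le (by omega : n + 1 ≤ 0) with h0 | h0
    · rw [Sgn, if_pos (by omega), Sgn, if_neg (by omega)]
      have hn : n = -1 := by omega
      subst hn
      simp [zmod2_add_self]
    · rw [Sgn, if_neg (by omega), Sgn, if_neg (by omega)]
      have ht : (-n).toNat = (-(n + 1)).toNat + 1 := by omega
      have h1 : ∀ j : ℕ, ξ (n + ((j : ℕ) + 1 : ℕ)) = ξ (n + 1 + j) := by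
        intro j; congr 1; push_cast; ring
      have h2 : ξ (n + ((0 : ℕ) : ℤ)) = ξ n := by norm_num
      rw [ht, Finset.sum_range_succ', h2, add_assoc, zmod2_add_self, add_zero]
      refine Finset.sum_congr rfl fun j _ => ?_
      rw [h1]

/-- Parity as a boolean. -/
def d2 (x : ZMod 2) : Bool := decide (x = 1)

lemma d2_add (x y : ZMod 2) : d2 (x + y) = xor (d2 x) (d2 y) := by revert x y; decide

lemma d2_wz (part : Fin N → Bool) (i : Fin N) : d2 (wz part i) = !(part i) := by
  by_cases h : part i <;> simp [wz, d2, h]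

/-- Embedding of `Σ_N` into the doubled shift, with initial orientation `b`. -/
def emb (part : Fin N → Bool) (b : Bool) (ξ : BSeq N) : ℤ → DSym N :=
  fun n => (ξ n, xor b (d2 (Sgn part ξ n)))

lemma emb_admissible (part : Fin N → Bool) (b : Bool) (ξ : BSeq N) :
    Admissible part (emb part b ξ) := by
  intro n
  show xor b (d2 (Sgn part ξ (n + 1))) = xor (xor b (d2 (Sgn part ξ n))) (!(part (ξ n)))
  rw [Sgn_succ, d2_add, d2_wz, ← Bool.xor_assoc]

lemma measurable_Sgn (part : Fin N → Bool) (n : ℤ) :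
    Measurable fun ξ : BSeq N => Sgn part ξ n := by
  unfold Sgn
  rcases le_or_gt 0 n with h | h
  · simp only [if_pos h]
    exact Finset.measurable_sum _ fun j _ =>
      (Measurable.of_discrete (f := wz part)).comp (measurable_pi_apply (j : ℤ))
  · simp only [if_neg (not_le.mpr h)]
    exact Finset.measurable_sum _ fun j _ =>
      (Measurable.of_discrete (f := wz part)).comp (measurable_pi_apply (n + j : ℤ))

lemma measurable_emb (part : Fin N → Bool) (b : Bool) : Measurable (emb part b) :=
  measurable_pi_lambda _ fun n =>
    (measurable_pi_apply n).prodMk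
      ((Measurable.of_discrete (f := fun x => xor b (d2 x))).comp (measurable_Sgn part n))

lemma measurable_projSeq : Measurable (projSeq (N := N)) :=
  measurable_pi_lambda _ fun n => measurable_fst.comp (measurable_pi_apply n)

lemma projSeq_emb (part : Fin N → Bool) (b : Bool) : projSeq (N := N) ∘ emb part b = id := rfl

/-- The symmetric probability vector. -/
def pD (p0 : Fin N → ℝ≥0∞) : DSym N → ℝ≥0∞ := fun s => p0 s.1 / 2

/-- The symmetric transition matrix. -/
def PD (part : Fin N → Bool) (P0 : Fin N → Fin N → ℝ≥0∞) : DSym N → DSym N → ℝ≥0∞ :=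
  fun s t => if t.2 = xor s.2 (!(part s.1)) then P0 s.1 t.1 else 0

/-- The symmetric extension measure. -/
def lamD (part : Fin N → Bool) (lam0 : MeasureTheory.Measure (BSeq N)) :
    MeasureTheory.Measure (ℤ → DSym N) :=
  (2⁻¹ : ℝ≥0∞) • (lam0.map (emb part false) + lam0.map (emb part true))

end USME
namespace USME
open scoped ENNReal

variable {N : ℕ}

lemma emb_step (part : Fin N → Bool) (b : Bool) (ξ : BSeq N) (x : ℤ) :
    xor b (d2 (Sgn part ξ (x + 1))) =
      xor (xor b (d2 (Sgn part ξ x))) (!(part (ξ x))) :=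
  emb_admissible part b ξ x

lemma preimage_cylinder_of_adm (part : Fin N → Bool) (b : Bool) (m : ℤ) (k : ℕ)
    (w : ℕ → DSym N)
    (hadm : ∀ i < k, (w (i + 1)).2 = xor (w i).2 (!(part (w i).1))) :
    emb part b ⁻¹' cylinder m k w =
      cylinder m k (fun i => (w i).1) ∩
        {ξ | xor b (d2 (Sgn part ξ m)) = (w 0).2} := by
  ext ξ
  simp only [Set.mem_preimage, Set.mem_inter_iff, Set.mem_setOf_eq, _root_.cylinder,
    emb, Prod.ext_iff]
  constructor
  · intro h
    refine ⟨fun i hi => (h i hi).1, ?_⟩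
    have := (h 0 (Nat.zero_le k)).2
    simpa using this
  · rintro ⟨h1, h2⟩
    have key : ∀ i, i ≤ k → xor b (d2 (Sgn part ξ (m + (i : ℕ)))) = (w i).2 := by
      intro i
      induction i with
      | zero => intro _; simpa using h2
      | succ i ih =>
        intro hik
        have hik' : i ≤ k := by omega
        have hi' : i < k := by omega
        have hc : (m + ((i + 1 : ℕ) : ℤ)) = (m + (i : ℕ)) + 1 := by push_cast; ring
        rw [hc, emb_step, ih hik', h1 i hik', hadm i hi']
    exact fun i hi => ⟨h1 i hi, key i hi⟩

lemma preimage_cylinder_of_not_adm (part : Fin N → Bool) (b : Bool) (m : ℤ) (k : ℕ)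
    (w : ℕ → DSym N) (i0 : ℕ) (hi0 : i0 < k)
    (hne : (w (i0 + 1)).2 ≠ xor (w i0).2 (!(part (w i0).1))) :
    emb part b ⁻¹' cylinder m k w = ∅ := by
  ext ξ
  simp only [Set.mem_preimage, Set.mem_empty_iff_false, iff_false]
  intro hmem
  have h1 := hmem i0 (le_of_lt hi0)
  have h2 := hmem (i0 + 1) hi0
  simp only [emb, Prod.ext_iff] at h1 h2
  obtain ⟨e1f, e1s⟩ := h1
  obtain ⟨e2f, e2s⟩ := h2
  apply hne
  rw [← e2s]
  have hc : (m + ((i0 + 1 : ℕ) : ℤ)) = (m + (i0 : ℕ)) + 1 := by push_cast; ring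
  rw [hc, emb_step, e1s, e1f]

lemma compl_E (part : Fin N → Bool) (m : ℤ) (c : Bool) :
    {ξ : BSeq N | xor true (d2 (Sgn part ξ m)) = c} =
      {ξ : BSeq N | xor false (d2 (Sgn part ξ m)) = c}ᶜ := by
  ext ξ
  simp only [Set.mem_setOf_eq, Set.mem_compl_iff, Bool.true_xor, Bool.false_xor]
  cases d2 (Sgn part ξ m) <;> cases c <;> simp

lemma measurable_E (part : Fin N → Bool) (b : Bool) (m : ℤ) (c : Bool) :
    MeasurableSet {ξ : BSeq N | xor b (d2 (Sgn part ξ m)) = c} :=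
  ((Measurable.of_discrete (f := fun x => xor b (d2 x))).comp
    (measurable_Sgn part m)) (measurableSet_singleton c)

lemma isMarkov_lamD (part : Fin N → Bool) (lam0 : MeasureTheory.Measure (BSeq N))
    (p0 : Fin N → ℝ≥0∞) (P0 : Fin N → Fin N → ℝ≥0∞) (h0 : IsMarkov lam0 p0 P0) :
    IsMarkov (lamD part lam0) (pD p0) (PD part P0) := by
  intro m k w
  have hmap : ∀ b : Bool,
      lam0.map (emb part b) (cylinder m k w) = lam0 (emb part b ⁻¹' cylinder m k w) :=
    fun b => MeasureTheory.Measure.map_apply (measurable_emb part b)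
      (measurableSet_cylinder m k w)
  have happ : lamD part lam0 (cylinder m k w) =
      2⁻¹ * (lam0 (emb part false ⁻¹' cylinder m k w) +
        lam0 (emb part true ⁻¹' cylinder m k w)) := by
    simp [lamD, MeasureTheory.Measure.add_apply, MeasureTheory.Measure.smul_apply,
      smul_eq_mul, hmap, mul_add]
  by_cases hadm : ∀ i < k, (w (i + 1)).2 = xor (w i).2 (!(part (w i).1))
  · have hpre := fun b => preimage_cylinder_of_adm part b m k w hadm
    have hcompl := compl_E part m ((w 0).2)
    rw [happ, hpre, hpre, hcompl, ← Set.diff_eq,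
      measure_inter_add_diff _ (measurable_E part false m ((w 0).2)),
      h0 m k (fun i => (w i).1)]
    have hprod : (∏ i ∈ Finset.range k, PD part P0 (w i) (w (i + 1))) =
        ∏ i ∈ Finset.range k, P0 (w i).1 (w (i + 1)).1 :=
      Finset.prod_congr rfl fun i hi => if_pos (hadm i (Finset.mem_range.mp hi))
    rw [hprod]
    show 2⁻¹ * (p0 (w 0).1 * _) = p0 (w 0).1 / 2 * _
    rw [ENNReal.div_eq_inv_mul]
    ring
  · push_neg at hadm
    obtain ⟨i0, hi0, hne⟩ := hadm
    have hz : PD part P0 (w i0) (w (i0 + 1)) = 0 := if_neg hne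
    rw [happ, preimage_cylinder_of_not_adm part false m k w i0 hi0 hne,
      preimage_cylinder_of_not_adm part true m k w i0 hi0 hne,
      Finset.prod_eq_zero (Finset.mem_range.mpr hi0) hz]
    simp

lemma isStochastic_D (part : Fin N → Bool) (p0 : Fin N → ℝ≥0∞)
    (P0 : Fin N → Fin N → ℝ≥0∞) (h0s : IsStochastic p0 P0) :
    IsStochastic (pD p0) (PD part P0) := by
  obtain ⟨hsum, hrow, hcol⟩ := h0s
  refine ⟨?_, ?_, ?_⟩
  · rw [Fintype.sum_prod_type]
    calc (∑ i : Fin N, ∑ b : Bool, pD p0 (i, b)) = ∑ i : Fin N, p0 i :=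
          Finset.sum_congr rfl fun i _ => by
            rw [Fintype.sum_bool]; exact ENNReal.add_halves _
      _ = 1 := hsum
  · intro s
    rw [Fintype.sum_prod_type]
    calc (∑ j : Fin N, ∑ c : Bool, PD part P0 s (j, c)) = ∑ j : Fin N, P0 s.1 j :=
          Finset.sum_congr rfl fun j _ => by
            rw [Fintype.sum_bool]
            cases h : xor s.2 (!(part s.1)) <;> simp [PD, h]
      _ = 1 := hrow s.1
  · intro t
    rw [Fintype.sum_prod_type]
    calc (∑ i : Fin N, ∑ b : Bool, pD p0 (i, b) * PD part P0 (i, b) t)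
        = ∑ i : Fin N, (p0 i * P0 i t.1) * 2⁻¹ := by
          refine Finset.sum_congr rfl fun i _ => ?_
          rw [Fintype.sum_bool]
          simp only [pD, PD]
          cases h : part i <;> cases ht : t.2 <;>
            simp [h, ht, ENNReal.div_eq_inv_mul] <;> ring
      _ = (∑ i : Fin N, p0 i * P0 i t.1) * 2⁻¹ := by rw [Finset.sum_mul]
      _ = pD p0 t := by rw [hcol t.1, pD, ENNReal.div_eq_inv_mul, mul_comm]

lemma compatA_D (part : Fin N → Bool) (P0 : Fin N → Fin N → ℝ≥0∞) :
    CompatA part (PD part P0) := fun _ _ h => if_neg h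

lemma symMarkov_D (part : Fin N → Bool) (p0 : Fin N → ℝ≥0∞)
    (P0 : Fin N → Fin N → ℝ≥0∞) : SymMarkov (pD p0) (PD part P0) := by
  constructor
  · intro s; rfl
  · rintro ⟨i, b⟩ ⟨j, c⟩
    cases b <;> cases c <;> cases h : part i <;> simp [PD, h]

lemma map_projSeq_lamD (part : Fin N → Bool) (lam0 : MeasureTheory.Measure (BSeq N)) :
    (lamD part lam0).map (projSeq (N := N)) = lam0 := by
  rw [lamD, MeasureTheory.Measure.map_smul,
    MeasureTheory.Measure.map_add _ _ measurable_projSeq,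
    MeasureTheory.Measure.map_map measurable_projSeq (measurable_emb part false),
    MeasureTheory.Measure.map_map measurable_projSeq (measurable_emb part true),
    projSeq_emb, projSeq_emb, MeasureTheory.Measure.map_id,
    ← two_smul ℝ≥0∞ lam0, smul_smul,
    ENNReal.inv_mul_cancel two_ne_zero ENNReal.ofNat_ne_top, one_smul]

lemma univ_of_map (lam0 : MeasureTheory.Measure (BSeq N))
    (μ : MeasureTheory.Measure (ℤ → DSym N)) (h : μ.map (projSeq (N := N)) = lam0) :
    μ Set.univ = lam0 Set.univ := by
  rw [← h, MeasureTheory.Measure.map_apply measurable_projSeq MeasurableSet.univ,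
    Set.preimage_univ]

end USME
namespace USME
open scoped ENNReal

variable {N : ℕ}

lemma p'_eq (part : Fin N → Bool) (lam0 : MeasureTheory.Measure (BSeq N))
    (p0 : Fin N → ℝ≥0∞) (P0 : Fin N → Fin N → ℝ≥0∞) (h0 : IsMarkov lam0 p0 P0)
    (lam' : MeasureTheory.Measure (ℤ → DSym N)) (p' : DSym N → ℝ≥0∞)
    (P' : DSym N → DSym N → ℝ≥0∞) (hM : IsMarkov lam' p' P') (hSym : SymMarkov p' P')
    (hproj : lam'.map (projSeq (N := N)) = lam0) :
    ∀ s, p' s = pD p0 s := by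
  rintro ⟨i, b⟩
  have hcyl0 : lam0 (cylinder 0 0 (fun _ => i)) = p0 i := by
    rw [h0 0 0 (fun _ => i)]; simp
  have hpre : projSeq (N := N) ⁻¹' (cylinder 0 0 (fun _ => i)) =
      cylinder 0 0 (fun _ => ((i, false) : DSym N)) ∪
        cylinder 0 0 (fun _ => ((i, true) : DSym N)) := by
    ext ω
    simp only [Set.mem_preimage, Set.mem_union, _root_.cylinder, Set.mem_setOf_eq, projSeq]
    constructor
    · intro h
      have h0' := h 0 (le_refl 0)
      cases hb : (ω ((0 : ℤ) + ((0 : ℕ) : ℤ))).2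
      · left
        intro j hj
        have hj0 : j = 0 := Nat.le_zero.mp hj
        subst hj0
        exact Prod.ext h0' hb
      · right
        intro j hj
        have hj0 : j = 0 := Nat.le_zero.mp hj
        subst hj0
        exact Prod.ext h0' hb
    · rintro (h | h) j hj <;> exact congrArg Prod.fst (h j hj)
  have hdisj : Disjoint (cylinder 0 0 (fun _ => ((i, false) : DSym N)))
      (cylinder 0 0 (fun _ => ((i, true) : DSym N))) := by
    refine Set.disjoint_left.mpr fun ω h1 h2 => ?_
    have e1 := h1 0 (le_refl 0)
    have e2 := h2 0 (le_refl 0)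
    rw [e1] at e2
    simpa using congrArg Prod.snd e2
  have hsum : p0 i = p' (i, false) + p' (i, true) := by
    rw [← hcyl0, ← hproj,
      MeasureTheory.Measure.map_apply measurable_projSeq (measurableSet_cylinder _ _ _),
      hpre, measure_union hdisj (measurableSet_cylinder _ _ _),
      hM 0 0 (fun _ => ((i, false) : DSym N)), hM 0 0 (fun _ => ((i, true) : DSym N))]
    simp
  have hsym : p' (i, false) = p' (i, true) := hSym.1 (i, false)
  have h2 : 2 * p' (i, false) = p0 i := by rw [hsum, ← hsym, two_mul]
  have hres : p' (i, false) = p0 i / 2 :=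
    (ENNReal.eq_div_iff two_ne_zero ENNReal.ofNat_ne_top).mpr h2
  cases b
  · exact hres
  · exact hsym ▸ hres

lemma P'_eq (part : Fin N → Bool) (lam0 : MeasureTheory.Measure (BSeq N))
    (p0 : Fin N → ℝ≥0∞) (P0 : Fin N → Fin N → ℝ≥0∞) (h0 : IsMarkov lam0 p0 P0)
    (hp0top : ∀ i, p0 i ≠ ⊤)
    (lam' : MeasureTheory.Measure (ℤ → DSym N)) (p' : DSym N → ℝ≥0∞)
    (P' : DSym N → DSym N → ℝ≥0∞) (hM : IsMarkov lam' p' P') (hC : CompatA part P')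
    (hSym : SymMarkov p' P') (hproj : lam'.map (projSeq (N := N)) = lam0) :
    ∀ s t, p0 s.1 ≠ 0 → P' s t = PD part P0 s t := by
  have hp' := p'_eq part lam0 p0 P0 h0 lam' p' P' hM hSym hproj
  rintro ⟨i, b⟩ ⟨j, c⟩ hzi
  by_cases hc : c = xor b (!(part i))
  case neg => exact (hC (i, b) (j, c) hc).trans (if_neg hc).symm
  case pos =>
  subst hc
  -- the base cylinder of length 2
  set w1 : ℕ → Fin N := fun n => if n = 0 then i else j with hw1
  have hcyl0 : lam0 (cylinder 0 1 w1) = p0 i * P0 i j := by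
    rw [h0 0 1 w1]
    simp [hw1]
  set W : Bool → Bool → ℕ → DSym N :=
    fun b c n => if n = 0 then (i, b) else (j, c) with hW
  have hmemW : ∀ (ω : ℤ → DSym N) (b c : Bool),
      ω ∈ cylinder 0 1 (W b c) ↔ ω 0 = (i, b) ∧ ω 1 = (j, c) := by
    intro ω b c
    constructor
    · intro h
      have e0 := h 0 (by omega)
      have e1 := h 1 (by omega)
      norm_num [hW] at e0 e1
      exact ⟨e0, e1⟩
    · rintro ⟨e0, e1⟩ r hr
      interval_cases r <;> norm_num [hW] <;> assumption
  have hpre : projSeq (N := N) ⁻¹' (cylinder 0 1 w1) =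
      ⋃ q ∈ (Finset.univ : Finset (Bool × Bool)), cylinder 0 1 (W q.1 q.2) := by
    ext ω
    simp only [Set.mem_preimage, Set.mem_iUnion, Finset.mem_univ, exists_prop, true_and]
    constructor
    · intro h
      refine ⟨((ω 0).2, (ω 1).2), (hmemW ω _ _).mpr ⟨?_, ?_⟩⟩
      · have := h 0 (by omega)
        norm_num [projSeq, hw1] at this
        exact Prod.ext this rfl
      · have := h 1 (by omega)
        norm_num [projSeq, hw1] at this
        exact Prod.ext this rfl
    · rintro ⟨q, hq⟩ r hr
      obtain ⟨e0, e1⟩ := (hmemW ω _ _).mp hq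
      interval_cases r <;> norm_num [projSeq, hw1] <;> simp [e0, e1]
  have hdisj : ((Finset.univ : Finset (Bool × Bool)) : Set (Bool × Bool)).PairwiseDisjoint
      (fun q : Bool × Bool => cylinder 0 1 (W q.1 q.2)) := by
    intro q _ q' _ hne
    refine Set.disjoint_left.mpr fun ω h1 h2 => hne ?_
    obtain ⟨e0, e1⟩ := (hmemW ω _ _).mp h1
    obtain ⟨e0', e1'⟩ := (hmemW ω _ _).mp h2
    rw [e0] at e0'
    rw [e1] at e1'
    have := congrArg Prod.snd e0'
    have := congrArg Prod.snd e1'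
    ext <;> simp_all
  have hval : ∀ b c : Bool,
      lam' (cylinder 0 1 (W b c)) = p' (i, b) * P' (i, b) (j, c) := by
    intro b c
    rw [hM 0 1 (W b c)]
    simp [hW]
  have hsum : p0 i * P0 i j = ∑ q : Bool × Bool, p' (i, q.1) * P' (i, q.1) (j, q.2) := by
    rw [← hcyl0, ← hproj,
      MeasureTheory.Measure.map_apply measurable_projSeq (measurableSet_cylinder _ _ _),
      hpre, measure_biUnion_finset hdisj (fun q _ => measurableSet_cylinder _ _ _)]
    exact Finset.sum_congr rfl fun q _ => hval q.1 q.2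
  rw [Fintype.sum_prod_type] at hsum
  simp only [Fintype.sum_bool] at hsum
  -- hsum : p0 i * P0 i j = (p'(i,T)*P'((i,T),(j,T)) + p'(i,T)*P'((i,T),(j,F)))
  --                       + (p'(i,F)*P'((i,F),(j,T)) + p'(i,F)*P'((i,F),(j,F)))
  cases hpi : part i
  · -- orientation reversing: admissible targets flip the bool
    have z1 : P' (i, true) (j, true) = 0 := hC _ _ (by simp [hpi])
    have z2 : P' (i, false) (j, false) = 0 := hC _ _ (by simp [hpi])
    have hs : P' (i, true) (j, false) = P' (i, false) (j, true) := by
      simpa using hSym.2 (i, true) (j, false)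
    rw [z1, z2, mul_zero, mul_zero, zero_add, add_zero, hs,
      hp' (i, true), hp' (i, false)] at hsum
    have hhalf : ∀ X : ℝ≥0∞, pD p0 (i, true) * X + pD p0 (i, false) * X = p0 i * X := by
      intro X
      rw [← add_mul]
      congr 1
      exact ENNReal.add_halves _
    have hsum2 : p0 i * P0 i j = p0 i * P' (i, false) (j, true) :=
      hsum.trans (hhalf _)
    have key : P0 i j = P' (i, false) (j, true) := ennreal_mul_cancel hzi (hp0top i) hsum2
    have hPD : PD part P0 (i, b) (j, xor b (!false)) = P0 i j := by simp [PD, hpi]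
    rw [hPD]
    cases b
    · exact key.symm
    · show P' (i, true) (j, false) = P0 i j
      rw [hs]; exact key.symm
  · have z1 : P' (i, true) (j, false) = 0 := hC _ _ (by simp [hpi])
    have z2 : P' (i, false) (j, true) = 0 := hC _ _ (by simp [hpi])
    have hs : P' (i, true) (j, true) = P' (i, false) (j, false) := by
      simpa using hSym.2 (i, true) (j, true)
    rw [z1, z2, mul_zero, mul_zero, zero_add, add_zero, hs,
      hp' (i, true), hp' (i, false)] at hsum
    have hhalf : ∀ X : ℝ≥0∞, pD p0 (i, true) * X + pD p0 (i, false) * X = p0 i * X := by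
      intro X
      rw [← add_mul]
      congr 1
      exact ENNReal.add_halves _
    have hsum2 : p0 i * P0 i j = p0 i * P' (i, false) (j, false) :=
      hsum.trans (hhalf _)
    have key : P0 i j = P' (i, false) (j, false) := ennreal_mul_cancel hzi (hp0top i) hsum2
    have hPD : PD part P0 (i, b) (j, xor b (!true)) = P0 i j := by simp [PD, hpi]
    rw [hPD]
    cases b
    · exact key.symm
    · show P' (i, true) (j, true) = P0 i j
      rw [hs]; exact key.symm

lemma chain_le (part : Fin N → Bool) (p0 : Fin N → ℝ≥0∞) (P0 : Fin N → Fin N → ℝ≥0∞)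
    (hSD : IsStochastic (pD p0) (PD part P0)) (w : ℕ → DSym N) :
    ∀ k, pD p0 (w 0) * ∏ r ∈ Finset.range k, PD part P0 (w r) (w (r + 1)) ≤ pD p0 (w k) := by
  intro k
  induction k with
  | zero => simp
  | succ k ih =>
    rw [Finset.prod_range_succ, ← mul_assoc]
    calc (pD p0 (w 0) * ∏ r ∈ Finset.range k, PD part P0 (w r) (w (r + 1))) *
          PD part P0 (w k) (w (k + 1))
        ≤ pD p0 (w k) * PD part P0 (w k) (w (k + 1)) := mul_le_mul_left ih _
      _ ≤ ∑ a, pD p0 a * PD part P0 a (w (k + 1)) :=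
          Finset.single_le_sum (f := fun a => pD p0 a * PD part P0 a (w (k + 1)))
            (fun _ _ => zero_le) (Finset.mem_univ (w k))
      _ = pD p0 (w (k + 1)) := hSD.2.2 (w (k + 1))

end USME
namespace USME
open scoped ENNReal

variable {N : ℕ}

lemma cylval_eq (part : Fin N → Bool) (p0 : Fin N → ℝ≥0∞) (P0 : Fin N → Fin N → ℝ≥0∞)
    (hSD : IsStochastic (pD p0) (PD part P0))
    (p' : DSym N → ℝ≥0∞) (P' : DSym N → DSym N → ℝ≥0∞)
    (hp' : ∀ s, p' s = pD p0 s)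
    (hP' : ∀ s t, p0 s.1 ≠ 0 → P' s t = PD part P0 s t) (w : ℕ → DSym N) :
    ∀ k, p' (w 0) * ∏ r ∈ Finset.range k, P' (w r) (w (r + 1)) =
      pD p0 (w 0) * ∏ r ∈ Finset.range k, PD part P0 (w r) (w (r + 1)) := by
  intro k
  induction k with
  | zero => simp [hp']
  | succ k ih =>
    rw [Finset.prod_range_succ, Finset.prod_range_succ, ← mul_assoc, ← mul_assoc, ih]
    by_cases hz : pD p0 (w 0) * ∏ r ∈ Finset.range k, PD part P0 (w r) (w (r + 1)) = 0
    · rw [hz, zero_mul, zero_mul]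
    · have hle := chain_le part p0 P0 hSD w k
      have hpk : pD p0 (w k) ≠ 0 := fun h => hz (le_antisymm (h ▸ hle) zero_le)
      have hp0k : p0 (w k).1 ≠ 0 := by
        intro h
        exact hpk (by simp [pD, h])
      rw [hP' (w k) (w (k + 1)) hp0k]

end USME

/-- **Lemma (unique symmetric Markov extension).** Every Markov measure `λ₀` on `Σ_N`
admits a unique symmetric Markov extension to `Σ_A`. -/
theorem unique_symmetric_markov_extension {N : ℕ} (part : Fin N → Bool)
    (lam0 : Measure (BSeq N)) [IsProbabilityMeasure lam0]
    (p0 : Fin N → ℝ≥0∞) (P0 : Fin N → Fin N → ℝ≥0∞)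
    (h0 : IsMarkov lam0 p0 P0) (h0s : IsStochastic p0 P0) :
    ∃! lam : Measure (ℤ → DSym N),
      ∃ (p : DSym N → ℝ≥0∞) (P : DSym N → DSym N → ℝ≥0∞),
        IsMarkov lam p P ∧ IsStochastic p P ∧ CompatA part P ∧ SymMarkov p P ∧
        lam.map (projSeq (N := N)) = lam0 := by
  classical
  have hMD := USME.isMarkov_lamD part lam0 p0 P0 h0
  have hSD := USME.isStochastic_D part p0 P0 h0s
  refine ⟨USME.lamD part lam0,
    ⟨USME.pD p0, USME.PD part P0, hMD, hSD, USME.compatA_D part P0,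
      USME.symMarkov_D part p0 P0, USME.map_projSeq_lamD part lam0⟩, ?_⟩
  rintro lam' ⟨p', P', hM, hS, hC, hSym, hproj⟩
  have hp0top : ∀ i, p0 i ≠ ⊤ := by
    intro i h
    have hle : p0 i ≤ ∑ a, p0 a :=
      Finset.single_le_sum (fun _ _ => zero_le) (Finset.mem_univ i)
    rw [h0s.1, h] at hle
    exact (by simp : ¬ (⊤ : ℝ≥0∞) ≤ 1) hle
  have hp' := USME.p'_eq part lam0 p0 P0 h0 lam' p' P' hM hSym hproj
  have hP' := USME.P'_eq part lam0 p0 P0 h0 hp0top lam' p' P' hM hC hSym hproj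
  have hcyl : ∀ (m : ℤ) (k : ℕ) (w : ℕ → DSym N),
      lam' (cylinder m k w) = USME.lamD part lam0 (cylinder m k w) := by
    intro m k w
    rw [hM m k w, hMD m k w]
    exact USME.cylval_eq part p0 P0 hSD p' P' hp' hP' w k
  haveI : IsFiniteMeasure lam' := by
    constructor
    rw [USME.univ_of_map lam0 lam' hproj]
    exact measure_lt_top lam0 _
  refine MeasureTheory.ext_of_generate_finite (USME.cylSets (DSym N))
    USME.generateFrom_cylSets USME.isPiSystem_cylSets ?_ ?_
  · rintro s ⟨m, k, B, rfl⟩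
    exact USME.measure_window_eq_of_cylinder_eq hcyl m k B
  · rw [USME.univ_of_map lam0 lam' hproj,
      USME.univ_of_map lam0 _ (USME.map_projSeq_lamD part lam0)]
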